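/- With R a commutative ring, R^s ⊂ R a subring such that R is free of rank 2 over R^s with basis {1, u} for some unit u ∈ R^×, and such that u·1* expressed in the dual basis has unit determinant, the functor M ↦ R ⊗_{R^s} M from R^s-modules to R-modules is naturally isomorphic to M ↦ Hom_{R^s}(R, M). Consequently the functor N ↦ R ⊗_{R^s} N (restrict then induce) from R-modules to R-modules is self-adjoint. -/

import Mathlib

open scoped TensorProduct

/-- if `R` is free of rank 2 over `R^s = A` with basis `{1, u}` for a unit `u`,
and the `A`-linear map `R → Hom_A(R, A)`, `r ↦ (x ↦ 1*(r·x))` has unit determinant in the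
dual basis, then `M ↦ R ⊗_A M` is naturally isomorphic to `M ↦ Hom_A(R, M)` (compatibly
with the `R`-actions), and consequently induction `N ↦ R ⊗_A N` is self-adjoint. -/
theorem stmt2 {A R : Type} [CommRing A] [CommRing R] [Algebra A R]
    (u : R) (hu : IsUnit u)
    (b : Module.Basis (Fin 2) A R) (hb0 : b 0 = 1) (hb1 : b 1 = u)
    (hdet : IsUnit (b.dualBasis.det
      (fun i => (b.coord 0) ∘ₗ (LinearMap.mulLeft A (b i))))) :
    (∃ e : ∀ (M : Type) [AddCommGroup M] [Module A M],
        (R ⊗[A] M) ≃ₗ[A] (R →ₗ[A] M),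
      (∀ (M : Type) [AddCommGroup M] [Module A M] (r : R) (x : R ⊗[A] M) (z : R),
          e M (r • x) z = e M x (z * r)) ∧
      (∀ (M N : Type) [AddCommGroup M] [Module A M] [AddCommGroup N] [Module A N]
          (g : M →ₗ[A] N) (x : R ⊗[A] M),
          e N (LinearMap.lTensor R g x) = g ∘ₗ (e M x))) ∧
    (∀ (N N' : Type) [AddCommGroup N] [Module A N] [Module R N] [IsScalarTower A R N]
        [AddCommGroup N'] [Module A N'] [Module R N'] [IsScalarTower A R N'],
      Nonempty ((R ⊗[A] N →ₗ[R] N') ≃ (N →ₗ[R] R ⊗[A] N'))) := by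
  -- the `A`-linear map `R → Hom_A(R, A)`, `r ↦ (x ↦ 1*(r·x))`
  let φ : R →ₗ[A] Module.Dual A R :=
    (LinearMap.llcomp A R R A (b.coord 0)).comp (LinearMap.mul A R)
  -- it is an isomorphism since its determinant in the bases `b`, `b.dualBasis` is a unit
  have hdet' : IsUnit (LinearMap.toMatrix b b.dualBasis φ).det := by
    rw [Module.Basis.det_apply] at hdet
    convert hdet using 2
    ext i j
    rw [LinearMap.toMatrix_apply, Module.Basis.toMatrix_apply]
    rfl
  let φeq : R ≃ₗ[A] Module.Dual A R := LinearEquiv.ofIsUnitDet hdet'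
  -- the natural isomorphism `R ⊗[A] M ≃ Hom_A(R, M)`
  let E : ∀ (M : Type) [AddCommGroup M] [Module A M], (R ⊗[A] M) ≃ₗ[A] (R →ₗ[A] M) :=
    fun M _ _ => (LinearEquiv.rTensor M φeq).trans (dualTensorHomEquivOfBasis b)
  have hE : ∀ (M : Type) [AddCommGroup M] [Module A M] (r : R) (m : M) (z : R),
      E M (r ⊗ₜ m) z = (b.coord 0) (r * z) • m := by
    intro M _ _ r m z
    simp only [E, LinearEquiv.trans_apply, LinearEquiv.rTensor_tmul,
      dualTensorHomEquivOfBasis_apply, dualTensorHom_apply]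
    rfl
  -- compatibility with the `R`-actions
  have h1 : ∀ (M : Type) [AddCommGroup M] [Module A M] (r : R) (x : R ⊗[A] M) (z : R),
      E M (r • x) z = E M x (z * r) := by
    intro M _ _ r x z
    induction x using TensorProduct.induction_on with
    | zero => simp
    | tmul s m => rw [TensorProduct.smul_tmul', smul_eq_mul, hE, hE]; congr 2; ring
    | add x y hx hy => simp only [smul_add, map_add, LinearMap.add_apply, hx, hy]
  -- naturality
  have h2 : ∀ (M N : Type) [AddCommGroup M] [Module A M] [AddCommGroup N] [Module A N]
      (g : M →ₗ[A] N) (x : R ⊗[A] M),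
      E N (LinearMap.lTensor R g x) = g ∘ₗ (E M x) := by
    intro M N _ _ _ _ g x
    induction x using TensorProduct.induction_on with
    | zero => simp
    | tmul s m => ext z; simp [hE]
    | add x y hx hy => simp only [map_add, hx, hy]; ext z; simp
  refine ⟨⟨E, h1, h2⟩, ?_⟩
  -- self-adjointness of induction, via the two adjunctions and the isomorphism `E`
  intro N N' _ _ _ _ _ _ _ _
  let coind : (R ⊗[A] N →ₗ[R] N') → N → (R →ₗ[A] N') := fun f n =>
    (f.restrictScalars A) ∘ₗ (TensorProduct.mk A R N 1) ∘ₗ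
      ((LinearMap.toSpanSingleton R N n).restrictScalars A)
  have hco : ∀ f n z, coind f n z = f (1 ⊗ₜ[A] (z • n)) := fun f n z => rfl
  let F : (R ⊗[A] N →ₗ[R] N') → (N →ₗ[R] R ⊗[A] N') := fun f =>
    { toFun := fun n => (E N').symm (coind f n)
      map_add' := by
        intro n m
        have h : coind f (n + m) = coind f n + coind f m := by
          ext z; simp [hco, smul_add, TensorProduct.tmul_add]
        rw [h, map_add]
      map_smul' := by
        intro r n
        dsimp only [RingHom.id_apply]
        apply (E N').injective
        rw [LinearEquiv.apply_symm_apply]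
        ext z
        rw [hco, h1, LinearEquiv.apply_symm_apply, hco, smul_smul] }
  let G : (N →ₗ[R] R ⊗[A] N') → (R ⊗[A] N →ₗ[R] N') := fun g =>
    TensorProduct.AlgebraTensorModule.lift
      (LinearMap.toSpanSingleton R (N →ₗ[A] N')
        ((LinearMap.applyₗ (1:R)) ∘ₗ (E N').toLinearMap ∘ₗ (g.restrictScalars A)))
  have hG : ∀ g (z : R) (n : N), G g (z ⊗ₜ[A] n) = z • (E N' (g n) 1) := by
    intro g z n
    simp [G, TensorProduct.AlgebraTensorModule.lift_tmul]
  refine ⟨⟨F, G, ?_, ?_⟩⟩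
  · intro f
    apply LinearMap.ext
    intro x
    induction x using TensorProduct.induction_on with
    | zero => simp
    | tmul z n =>
        rw [hG]
        show z • (E N' ((E N').symm (coind f n)) 1) = _
        rw [LinearEquiv.apply_symm_apply, hco, one_smul, ← f.map_smul,
          TensorProduct.smul_tmul', smul_eq_mul, mul_one]
    | add x y hx hy => rw [map_add, map_add, hx, hy]
  · intro g
    apply LinearMap.ext
    intro n
    show (E N').symm (coind (G g) n) = g n
    have h : coind (G g) n = E N' (g n) := by
      ext z
      rw [hco, hG, g.map_smul, h1, one_smul, one_mul]
    rw [h, LinearEquiv.symm_apply_apply]
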